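/- Let G be a connected vertex-transitive k-regular simple graph. If the girth of G is greater than 3, or |V(G)| < 2k, then d_G(X) ≥ 2k − 2 for every subset X of V(G) with 2 ≤ |X| ≤ |V(G)| − 2. -/

import Mathlib

open SimpleGraph

section Defs

variable {V : Type*}

/-- A simple graph is vertex-transitive if any vertex can be mapped to any other
by a graph automorphism. -/
def VertexTransitive (G : SimpleGraph V) : Prop :=
  ∀ x y : V, ∃ φ : G ≃g G, φ x = y

/-- A graph is `p`-factor-critical if the removal of any set of `p` vertices
results in a graph with a perfect matching. -/
def PFactorCritical (G : SimpleGraph V) (p : ℕ) : Prop :=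
  ∀ X : Set V, X.ncard = p → ∃ M : (G.induce Xᶜ).Subgraph, M.IsPerfectMatching

/-- A graph is factor-critical if the removal of any single vertex results in a
graph with a perfect matching. -/
def IsFactorCritical {W : Type*} (H : SimpleGraph W) : Prop :=
  ∀ v : W, ∃ M : (H.induce ({v}ᶜ : Set W)).Subgraph, M.IsPerfectMatching

/-- `∇(X)`: the set of edges of `G` with exactly one end in `X`. -/
def edgeBoundary (G : SimpleGraph V) (X : Set V) : Set (Sym2 V) :=
  {e | e ∈ G.edgeSet ∧ ∃ x ∈ X, ∃ y ∈ Xᶜ, e = s(x, y)}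

/-- The set of edges of `G` with both ends in `X`. -/
def edgesWithin (G : SimpleGraph V) (X : Set V) : Set (Sym2 V) :=
  {e | e ∈ G.edgeSet ∧ ∀ v ∈ e, v ∈ X}

/-- The set of edges of `G` with one end in `A` and the other end in `S \ A`
(i.e. the edge boundary of `A` inside the induced subgraph `G[S]` when `A ⊆ S`). -/
def inducedEdgeBoundary (G : SimpleGraph V) (S A : Set V) : Set (Sym2 V) :=
  {e | e ∈ G.edgeSet ∧ ∃ x ∈ A, ∃ y ∈ S \ A, e = s(x, y)}

/-- `F` is an `s`-restricted edge-cut of `G` if deleting `F` disconnects `G` and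
every component of `G − F` has at least `s` vertices. -/
def IsRestrictedEdgeCut (G : SimpleGraph V) (s : ℕ) (F : Set (Sym2 V)) : Prop :=
  F ⊆ G.edgeSet ∧ ¬ (G.deleteEdges F).Connected ∧
    ∀ c : (G.deleteEdges F).ConnectedComponent, s ≤ c.supp.ncard

/-- `λ_s(G)`: the minimum cardinality of an `s`-restricted edge-cut of `G`. -/
noncomputable def lambdaS (G : SimpleGraph V) (s : ℕ) : ℕ :=
  sInf (Set.ncard '' {F | IsRestrictedEdgeCut G s F})

/-- A `λ_s`-fragment: a vertex set whose edge boundary is an `s`-restricted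
edge-cut of minimum cardinality `λ_s(G)`. -/
def IsLambdaFragment (G : SimpleGraph V) (s : ℕ) (X : Set V) : Prop :=
  IsRestrictedEdgeCut G s (edgeBoundary G X) ∧ (edgeBoundary G X).ncard = lambdaS G s

/-- A `λ_s`-atom: a `λ_s`-fragment of minimum cardinality. -/
def IsLambdaAtom (G : SimpleGraph V) (s : ℕ) (X : Set V) : Prop :=
  IsLambdaFragment G s X ∧ ∀ Y : Set V, IsLambdaFragment G s Y → X.ncard ≤ Y.ncard

/-- The odd girth of `G`: the length of a shortest odd cycle of `G`. -/
noncomputable def oddGirth (G : SimpleGraph V) : ℕ :=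
  sInf {n | Odd n ∧ ∃ (v : V) (c : G.Walk v v), c.IsCycle ∧ c.length = n}

/-- `X` is an independent set of `G`. -/
def IsIndependentSet (G : SimpleGraph V) (X : Set V) : Prop :=
  ∀ x ∈ X, ∀ y ∈ X, ¬ G.Adj x y

/-- The independence number `α(G)`. -/
noncomputable def indepNum (G : SimpleGraph V) : ℕ :=
  sSup {n | ∃ X : Set V, IsIndependentSet G X ∧ X.ncard = n}

/-- The number of trivial (single-vertex) components of `G − X`. -/
noncomputable def trivialComponentCount (G : SimpleGraph V) (X : Set V) : ℕ :=
  {c : (G.induce Xᶜ).ConnectedComponent | c.supp.ncard = 1}.ncard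

/-- The number of odd components of `G − X`. -/
noncomputable def oddComponentCount (G : SimpleGraph V) (X : Set V) : ℕ :=
  {c : (G.induce Xᶜ).ConnectedComponent | Odd c.supp.ncard}.ncard

/-- The number of nontrivial components of `G − X`. -/
noncomputable def nontrivialComponentCount (G : SimpleGraph V) (X : Set V) : ℕ :=
  {c : (G.induce Xᶜ).ConnectedComponent | 2 ≤ c.supp.ncard}.ncard

/-- An imprimitive block of `G`: a proper non-empty vertex set that every
automorphism either fixes setwise or maps to a disjoint set. -/
def IsImprimitiveBlock (G : SimpleGraph V) (X : Set V) : Prop :=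
  X.Nonempty ∧ X ≠ Set.univ ∧ ∀ φ : G ≃g G, (⇑φ) '' X = X ∨ ((⇑φ) '' X) ∩ X = ∅

/-- A connected graph is `q`-extendable if it has a perfect matching and every
matching of size `q` is contained in a perfect matching. -/
def Extendable (G : SimpleGraph V) (q : ℕ) : Prop :=
  (∃ M : G.Subgraph, M.IsPerfectMatching) ∧
    ∀ M : G.Subgraph, M.IsMatching → M.edgeSet.ncard = q →
      ∃ P : G.Subgraph, P.IsPerfectMatching ∧ M ≤ P

end Defs

section AuxLemmas
set_option linter.unusedSectionVars false
namespace Stmt2Aux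
variable {V : Type*} [Fintype V] [DecidableEq V] (G : SimpleGraph V) [DecidableRel G.Adj]

open Classical in
noncomputable def bdF (X : Set V) : Finset (V × V) :=
  Finset.univ.filter (fun p => G.Adj p.1 p.2 ∧ p.1 ∈ X ∧ p.2 ∉ X)

open Classical in
noncomputable def extF (X : Set V) (v : V) : Finset V :=
  Finset.univ.filter (fun w => G.Adj v w ∧ w ∉ X)

open Classical in
noncomputable def intF (X : Set V) (v : V) : Finset V :=
  Finset.univ.filter (fun w => G.Adj v w ∧ w ∈ X)

open Classical in
noncomputable def vF (X : Set V) : Finset V := Finset.univ.filter (· ∈ X)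

lemma mem_bdF {X : Set V} {p : V × V} :
    p ∈ bdF G X ↔ G.Adj p.1 p.2 ∧ p.1 ∈ X ∧ p.2 ∉ X := by
  simp [bdF]

lemma mem_extF {X : Set V} {v w : V} :
    w ∈ extF G X v ↔ G.Adj v w ∧ w ∉ X := by simp [extF]

lemma mem_intF {X : Set V} {v w : V} :
    w ∈ intF G X v ↔ G.Adj v w ∧ w ∈ X := by simp [intF]

lemma mem_vF {X : Set V} {v : V} : v ∈ vF X ↔ v ∈ X := by simp [vF]

lemma card_vF (X : Set V) : (vF X).card = X.ncard := by
  classical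
  rw [Set.ncard_eq_toFinset_card']
  congr 1
  ext v
  simp [vF]

lemma ncard_edgeBoundary_eq (X : Set V) :
    (edgeBoundary G X).ncard = (bdF G X).card := by
  classical
  have himg : edgeBoundary G X = (fun p : V × V => s(p.1, p.2)) '' ↑(bdF G X) := by
    ext e
    constructor
    · rintro ⟨he, x, hx, y, hy, rfl⟩
      exact ⟨(x, y), by simp [mem_bdF, hx, (Set.mem_compl_iff _ _).mp hy, (SimpleGraph.mem_edgeSet G).mp he], rfl⟩
    · rintro ⟨⟨x, y⟩, hp, rfl⟩
      rw [Finset.mem_coe, mem_bdF] at hp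
      exact ⟨hp.1, x, hp.2.1, y, hp.2.2, rfl⟩
  rw [himg, Set.ncard_image_of_injOn, Set.ncard_coe_finset]
  rintro ⟨a, b⟩ ha ⟨c, d⟩ hc h
  rw [Finset.mem_coe, mem_bdF] at ha hc
  simp only [Sym2.eq, Sym2.rel_iff', Prod.mk.injEq, Prod.swap_prod_mk] at h
  rcases h with ⟨rfl, rfl⟩ | ⟨rfl, rfl⟩
  · rfl
  · exact absurd ha.2.1 hc.2.2

lemma card_bdF_compl (X : Set V) : (bdF G Xᶜ).card = (bdF G X).card := by
  classical
  have : bdF G Xᶜ = (bdF G X).image Prod.swap := by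
    ext ⟨a, b⟩
    simp only [mem_bdF, Finset.mem_image, Set.mem_compl_iff, not_not]
    constructor
    · rintro ⟨h1, h2, h3⟩
      exact ⟨(b, a), ⟨h1.symm, h3, h2⟩, rfl⟩
    · rintro ⟨⟨c, d⟩, ⟨h1, h2, h3⟩, h⟩
      cases h
      exact ⟨h1.symm, h3, h2⟩
  rw [this, Finset.card_image_of_injective _ Prod.swap_injective]

lemma card_bdF_sum (X : Set V) :
    (bdF G X).card = ∑ v ∈ vF X, (extF G X v).card := by
  classical
  rw [Finset.card_eq_sum_card_fiberwise (f := Prod.fst) (t := vF X)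
    (fun p hp => (mem_vF).mpr ((mem_bdF G).mp hp).2.1)]
  refine Finset.sum_congr rfl fun v hv => ?_
  rw [mem_vF] at hv
  have himg : ((bdF G X).filter fun p => p.1 = v).image Prod.snd = extF G X v := by
    ext w
    simp only [Finset.mem_image, Finset.mem_filter, mem_bdF, mem_extF]
    constructor
    · rintro ⟨⟨a, b⟩, ⟨⟨h1, h2, h3⟩, rfl⟩, rfl⟩
      exact ⟨h1, h3⟩
    · rintro ⟨h1, h2⟩
      exact ⟨(v, w), ⟨⟨h1, hv, h2⟩, rfl⟩, rfl⟩
  rw [← himg, Finset.card_image_of_injOn]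
  rintro ⟨a, b⟩ ha ⟨c, d⟩ hc h
  simp only [Finset.mem_coe, Finset.mem_filter] at ha hc
  simp only at h
  rw [Prod.ext_iff]
  exact ⟨ha.2.trans hc.2.symm, h⟩

lemma card_ext_add_int {k : ℕ} (hreg : G.IsRegularOfDegree k) (X : Set V) (v : V) :
    (extF G X v).card + (intF G X v).card = k := by
  classical
  have hd : extF G X v ∪ intF G X v = G.neighborFinset v := by
    ext w
    simp only [Finset.mem_union, mem_extF, mem_intF, mem_neighborFinset]
    tauto
  have hdisj : Disjoint (extF G X v) (intF G X v) := by
    rw [Finset.disjoint_left]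
    intro w hw hw'
    exact ((mem_extF G).mp hw).2 ((mem_intF G).mp hw').2
  rw [← Finset.card_union_of_disjoint hdisj, hd, card_neighborFinset_eq_degree, hreg v]

lemma submod (Y Z : Set V) :
    (bdF G (Y ∩ Z)).card + (bdF G (Y ∪ Z)).card ≤ (bdF G Y).card + (bdF G Z).card := by
  classical
  have h1 : bdF G (Y ∩ Z) ∪ bdF G (Y ∪ Z) ⊆ bdF G Y ∪ bdF G Z := by
    intro p hp
    rw [Finset.mem_union] at hp ⊢
    simp only [mem_bdF, Set.mem_inter_iff, Set.mem_union] at hp ⊢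
    tauto
  have h2 : bdF G (Y ∩ Z) ∩ bdF G (Y ∪ Z) ⊆ bdF G Y ∩ bdF G Z := by
    intro p hp
    rw [Finset.mem_inter] at hp ⊢
    simp only [mem_bdF, Set.mem_inter_iff, Set.mem_union] at hp ⊢
    tauto
  calc (bdF G (Y ∩ Z)).card + (bdF G (Y ∪ Z)).card
      = (bdF G (Y ∩ Z) ∪ bdF G (Y ∪ Z)).card + (bdF G (Y ∩ Z) ∩ bdF G (Y ∪ Z)).card := by
        rw [Finset.card_union_add_card_inter]
    _ ≤ (bdF G Y ∪ bdF G Z).card + (bdF G Y ∩ bdF G Z).card :=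
        Nat.add_le_add (Finset.card_le_card h1) (Finset.card_le_card h2)
    _ = (bdF G Y).card + (bdF G Z).card := Finset.card_union_add_card_inter _ _


lemma bdF_image (φ : G ≃g G) (X : Set V) :
    bdF G ((⇑φ) '' X) = (bdF G X).image (Prod.map (⇑φ) (⇑φ)) := by
  classical
  ext ⟨a, b⟩
  simp only [mem_bdF, Finset.mem_image]
  constructor
  · rintro ⟨h1, h2, h3⟩
    refine ⟨(φ.symm a, φ.symm b), ⟨?_, ?_, ?_⟩, by simp [Prod.map]⟩
    · exact (φ.symm.map_adj_iff).mpr h1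
    · obtain ⟨x, hx, rfl⟩ := h2
      simpa using hx
    · intro hb
      exact h3 ⟨_, hb, by simp⟩
  · rintro ⟨⟨x, y⟩, ⟨h1, h2, h3⟩, h⟩
    cases h
    refine ⟨φ.map_adj_iff.mpr h1, ⟨x, h2, rfl⟩, ?_⟩
    rintro ⟨y', hy', he⟩
    exact h3 (φ.toEquiv.injective he ▸ hy')

lemma card_bdF_image (φ : G ≃g G) (X : Set V) :
    (bdF G ((⇑φ) '' X)).card = (bdF G X).card := by
  rw [bdF_image, Finset.card_image_of_injective]
  rintro ⟨a, b⟩ ⟨c, d⟩ h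
  simp only [Prod.map, Prod.mk.injEq] at h
  exact Prod.ext (φ.toEquiv.injective h.1) (φ.toEquiv.injective h.2)

lemma intF_image (φ : G ≃g G) (X : Set V) (v : V) :
    intF G ((⇑φ) '' X) (φ v) = (intF G X v).image (⇑φ) := by
  classical
  ext w
  simp only [mem_intF, Finset.mem_image]
  constructor
  · rintro ⟨h1, x, hx, rfl⟩
    exact ⟨x, ⟨φ.map_adj_iff.mp h1, hx⟩, rfl⟩
  · rintro ⟨x, ⟨h1, h2⟩, rfl⟩
    exact ⟨φ.map_adj_iff.mpr h1, x, h2, rfl⟩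

lemma card_intF_image (φ : G ≃g G) (X : Set V) (v : V) :
    (intF G ((⇑φ) '' X) (φ v)).card = (intF G X v).card := by
  rw [intF_image]
  exact Finset.card_image_of_injective _ (fun a b h => φ.toEquiv.injective h)

lemma cross_of_walk {A : Set V} :
    ∀ {u v : V}, G.Walk u v → u ∈ A → v ∉ A → ∃ p, p ∈ bdF G A := by
  intro u v w
  induction w with
  | nil => intro h1 h2; exact absurd h1 h2
  | cons h p ih =>
    rename_i a b c
    intro ha hc
    by_cases hb : b ∈ A
    · exact ih hb hc
    · exact ⟨(a, b), (mem_bdF G).mpr ⟨h, ha, hb⟩⟩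

lemma bdF_nonempty (hconn : G.Connected) {A : Set V} (h1 : A.Nonempty)
    (h2 : Aᶜ.Nonempty) : ∃ p, p ∈ bdF G A := by
  obtain ⟨u, hu⟩ := h1
  obtain ⟨v, hv⟩ := h2
  exact cross_of_walk G (hconn.preconnected u v).some hu hv

lemma intF_pair_subset {u v : V} (huv : u ≠ v) :
    intF G {u, v} u ⊆ {v} := by
  intro w hw
  rw [mem_intF] at hw
  rcases hw.2 with rfl | rfl
  · exact absurd rfl hw.1.ne'
  · exact Finset.mem_singleton_self _

lemma card_bdF_pair {k : ℕ} (hreg : G.IsRegularOfDegree k) {u v : V} (huv : u ≠ v) :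
    2 * k - 2 ≤ (bdF G ({u, v} : Set V)).card := by
  classical
  have hvf : vF ({u, v} : Set V) = {u, v} := by
    ext w; simp [mem_vF]
  have hsum := card_bdF_sum G ({u, v} : Set V)
  rw [hvf] at hsum
  rw [Finset.sum_pair huv] at hsum
  have h1 := card_ext_add_int G hreg ({u, v} : Set V) u
  have h2 := card_ext_add_int G hreg ({u, v} : Set V) v
  have hi1 : (intF G ({u, v} : Set V) u).card ≤ 1 := by
    have := Finset.card_le_card (intF_pair_subset G huv)
    simpa using this
  have hi2 : (intF G ({u, v} : Set V) v).card ≤ 1 := by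
    have hsub : intF G ({u, v} : Set V) v ⊆ {u} := by
      have : ({u, v} : Set V) = {v, u} := by ext; simp; tauto
      rw [this]
      exact intF_pair_subset G huv.symm
    have := Finset.card_le_card hsub
    simpa using this
  omega

lemma ncard_pair_ge {X : Set V} {u v : V} (hu : u ∈ X) (hv : v ∈ X) (huv : u ≠ v) :
    2 ≤ X.ncard := by
  have h : ({u, v} : Set V) ⊆ X := by
    rintro w (rfl | rfl)
    · exact hu
    · exact hv
  calc 2 = ({u, v} : Set V).ncard := (Set.ncard_pair huv).symm
    _ ≤ X.ncard := Set.ncard_le_ncard h (Set.toFinite X)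

/-- Removal identity: for v ∈ X, d(X \ {v}) + e_v = d(X) + a_v. -/
lemma card_bdF_remove {X : Set V} {v : V} (hv : v ∈ X) :
    (bdF G (X \ {v})).card + (extF G X v).card
      = (bdF G X).card + (intF G X v).card := by
  classical
  have hvf : vF (X \ {v}) = (vF X).erase v := by
    ext w; simp [mem_vF, Finset.mem_erase, and_comm]
  have hterm : ∀ u ∈ (vF X).erase v,
      (extF G (X \ {v}) u).card = (extF G X u).card + (if G.Adj u v then 1 else 0) := by
    intro u hu
    have huv : u ≠ v := (Finset.mem_erase.mp hu).1
    have hE : extF G (X \ {v}) u = extF G X u ∪ (if G.Adj u v then {v} else ∅) := by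
      ext w
      by_cases hadj : G.Adj u v <;>
        simp only [mem_extF, Set.mem_diff, Set.mem_singleton_iff, hadj, if_true, if_false,
          Finset.mem_union, Finset.mem_singleton, Finset.notMem_empty, or_false] <;>
        constructor
      · rintro ⟨h1, h2⟩
        by_cases hwv : w = v
        · exact Or.inr hwv
        · exact Or.inl ⟨h1, fun hw => h2 ⟨hw, hwv⟩⟩
      · rintro (⟨h1, h2⟩ | rfl)
        · exact ⟨h1, fun hw => h2 hw.1⟩
        · exact ⟨hadj, fun hw => hw.2 rfl⟩
      · rintro ⟨h1, h2⟩
        refine ⟨h1, fun hw => h2 ⟨hw, ?_⟩⟩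
        rintro rfl
        exact hadj h1
      · rintro ⟨h1, h2⟩
        exact ⟨h1, fun hw => h2 hw.1⟩
    rw [hE]
    by_cases hadj : G.Adj u v
    · simp only [hadj, if_true]
      rw [Finset.card_union_of_disjoint]
      · simp
      · simp only [Finset.disjoint_singleton_right, mem_extF]
        exact fun h => h.2 hv
    · simp [hadj]
  have hsum1 : (bdF G (X \ {v})).card
      = (∑ u ∈ (vF X).erase v, (extF G X u).card)
        + (∑ u ∈ (vF X).erase v, if G.Adj u v then 1 else 0) := by
    rw [card_bdF_sum, hvf, ← Finset.sum_add_distrib]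
    exact Finset.sum_congr rfl hterm
  have hsum2 : (∑ u ∈ (vF X).erase v, if G.Adj u v then 1 else 0) = (intF G X v).card := by
    rw [← Finset.card_filter]
    congr 1
    ext w
    simp only [Finset.mem_filter, Finset.mem_erase, mem_vF, mem_intF]
    constructor
    · rintro ⟨⟨h1, h2⟩, h3⟩
      exact ⟨h3.symm, h2⟩
    · rintro ⟨h1, h2⟩
      exact ⟨⟨h1.ne', h2⟩, h1.symm⟩
  have hsum3 : (bdF G X).card = (extF G X v).card + ∑ u ∈ (vF X).erase v, (extF G X u).card := by
    rw [card_bdF_sum]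
    exact (Finset.add_sum_erase _ _ ((mem_vF).mpr hv)).symm
  omega

lemma small_case {k : ℕ} (hreg : G.IsRegularOfDegree k) (X : Set V)
    (h2 : 2 ≤ X.ncard) (hle : 2 * X.ncard ≤ Fintype.card V)
    (hnk : Fintype.card V < 2 * k) : 2 * k - 2 ≤ (bdF G X).card := by
  classical
  set m := X.ncard with hm
  have hmk : m + 1 ≤ k := by omega
  have hbound : ∀ v ∈ vF X, k - m + 1 ≤ (extF G X v).card := by
    intro v hv
    have h1 := card_ext_add_int G hreg X v
    have hsub : intF G X v ⊆ (vF X).erase v := by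
      intro w hw
      rw [mem_intF] at hw
      rw [Finset.mem_erase, mem_vF]
      exact ⟨hw.1.ne', hw.2⟩
    have h3 : (intF G X v).card ≤ m - 1 := by
      have := Finset.card_le_card hsub
      rw [Finset.card_erase_of_mem hv, card_vF] at this
      exact this
    omega
  have hsum : (vF X).card * (k - m + 1) ≤ (bdF G X).card := by
    rw [card_bdF_sum]
    calc (vF X).card * (k - m + 1) = ∑ _v ∈ vF X, (k - m + 1) := by
          rw [Finset.sum_const, smul_eq_mul]
      _ ≤ ∑ v ∈ vF X, (extF G X v).card := Finset.sum_le_sum hbound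
  rw [card_vF, ← hm] at hsum
  have key : 2 * k - 2 ≤ m * (k - m + 1) := by
    obtain ⟨a, ha⟩ : ∃ a, m = a + 2 := ⟨m - 2, by omega⟩
    obtain ⟨b, hb⟩ : ∃ b, k - m + 1 = b + 2 := ⟨k - m - 1, by omega⟩
    have hexp : (a + 2) * (b + 2) = a * b + 2 * a + 2 * b + 4 := by ring
    have h5 : 2 * k - 2 ≤ (a + 2) * (b + 2) := by
      rw [hexp]
      omega
    rwa [← ha, ← hb] at h5
  omega

lemma triangle_free_of_girth {u v w : V} (hg : 3 < G.girth)
    (huv : G.Adj u v) (hvw : G.Adj v w) (hwu : G.Adj w u) : False := by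
  have hc : (Walk.cons huv (Walk.cons hvw (Walk.cons hwu Walk.nil))).IsCycle := by
    simp [Walk.isCycle_def, Walk.isTrail_def, huv.ne, hvw.ne, hwu.ne, huv.ne', hvw.ne', hwu.ne']
  have hne : G.egirth ≠ ⊤ := fun h => (egirth_eq_top.mp h) _ hc
  have h4 : (4 : ℕ∞) ≤ G.egirth := by
    unfold SimpleGraph.girth at hg
    rw [← ENat.coe_toNat hne]
    exact_mod_cast hg
  have h := le_egirth.mp h4 _ _ hc
  norm_num at h

end Stmt2Aux


end AuxLemmas

open Stmt2Aux in
/-- If a connected vertex-transitive `k`-regular graph has girth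
greater than 3, or fewer than `2k` vertices, then `d_G(X) ≥ 2k − 2` for every
vertex set `X` with `2 ≤ |X| ≤ |V(G)| − 2`. -/
theorem statement2 {V : Type*} [Fintype V] [DecidableEq V]
    (G : SimpleGraph V) [DecidableRel G.Adj] (k : ℕ)
    (hconn : G.Connected) (hvt : VertexTransitive G) (hreg : G.IsRegularOfDegree k)
    (hg : 3 < G.girth ∨ Fintype.card V < 2 * k)
    (X : Set V) (hX1 : 2 ≤ X.ncard) (hX2 : X.ncard ≤ Fintype.card V - 2) :
    2 * k - 2 ≤ (edgeBoundary G X).ncard := by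
    classical
  rw [ncard_edgeBoundary_eq]
  by_contra hcon
  push_neg at hcon
  have hk : 2 ≤ k := by omega
  set n := Fintype.card V with hn
  have hXc : X.ncard + Xᶜ.ncard = n := by
    rw [hn, ← Nat.card_eq_fintype_card]
    exact Set.ncard_add_ncard_compl X
  have hn4 : 4 ≤ n := by omega
  rcases hg with hg | hg
  case inr =>
    rcases le_or_gt (2 * X.ncard) n with h | h
    · exact absurd (small_case G hreg X hX1 h hg) (by omega)
    · have h2 : 2 * Xᶜ.ncard ≤ n := by omega
      have h3 : 2 ≤ Xᶜ.ncard := by omega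
      have := small_case G hreg Xᶜ h3 h2 hg
      rw [card_bdF_compl] at this
      omega
  case inl =>
  set S : Set V → Prop := fun Y => 2 ≤ Y.ncard ∧ Y.ncard ≤ n - 2 with hS
  have hSX : S X := ⟨hX1, hX2⟩
  set Vals : Set ℕ := {m | ∃ Y, S Y ∧ (bdF G Y).card = m} with hVals
  set lam : ℕ := sInf Vals with hlamdef
  have hlam_lb : ∀ Y, S Y → lam ≤ (bdF G Y).card := fun Y hY => Nat.sInf_le ⟨Y, hY, rfl⟩
  have hlam_mem : lam ∈ Vals := Nat.sInf_mem ⟨(bdF G X).card, X, hSX, rfl⟩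
  have hlam_small : lam ≤ 2 * k - 3 := by
    have := hlam_lb X hSX
    omega
  set Sz : Set ℕ := {m | ∃ Y, S Y ∧ (bdF G Y).card = lam ∧ Y.ncard = m} with hSz
  have hSzne : Sz.Nonempty := by
    obtain ⟨Y, hY1, hY2⟩ := hlam_mem
    exact ⟨Y.ncard, Y, hY1, hY2, rfl⟩
  obtain ⟨A, hSA, hDA, hAcard⟩ : ∃ A, S A ∧ (bdF G A).card = lam ∧ A.ncard = sInf Sz :=
    Nat.sInf_mem hSzne
  have hmin_size : ∀ Y, S Y → (bdF G Y).card = lam → A.ncard ≤ Y.ncard := fun Y h1 h2 =>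
    hAcard ▸ Nat.sInf_le ⟨Y, h1, h2, rfl⟩
  have hAn : A.ncard + Aᶜ.ncard = n := by
    rw [hn, ← Nat.card_eq_fintype_card]
    exact Set.ncard_add_ncard_compl A
  have hSA1 : 2 ≤ A.ncard := hSA.1
  have hSA2 : A.ncard ≤ n - 2 := hSA.2
  -- A is at most half
  have hhalf : 2 * A.ncard ≤ n := by
    have hDAc : (bdF G Aᶜ).card = lam := by rw [card_bdF_compl]; exact hDA
    have hSAc : S Aᶜ := ⟨by omega, by omega⟩
    have := hmin_size Aᶜ hSAc hDAc
    omega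
  -- |A| ≥ 3
  have hs3 : 3 ≤ A.ncard := by
    by_contra h3
    have h2 : A.ncard = 2 := by omega
    obtain ⟨u, v, huv, rfl⟩ := Set.ncard_eq_two.mp h2
    have := card_bdF_pair G hreg huv
    omega
  -- internal degree bound for atoms
  have hint : ∀ B : Set V, S B → (bdF G B).card = lam → B.ncard = A.ncard →
      ∀ v ∈ B, k + 1 ≤ 2 * (intF G B v).card := by
    intro B hSB hDB hBc v hv
    have hrem := card_bdF_remove G hv
    have hBv : (B \ {v}).ncard = B.ncard - 1 :=
      Set.ncard_diff_singleton_of_mem hv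
    have hSBv : S (B \ {v}) := ⟨by omega, by omega⟩
    have h1 : lam ≤ (bdF G (B \ {v})).card := hlam_lb _ hSBv
    have h2 : (bdF G (B \ {v})).card ≠ lam := by
      intro h
      have := hmin_size _ hSBv h
      omega
    have he_i := card_ext_add_int G hreg B v
    omega
  -- block property
  have hblock : ∀ φ : G ≃g G, (⇑φ) '' A = A ∨ ((⇑φ) '' A) ∩ A = ∅ := by
    intro φ
    by_contra hb
    push_neg at hb
    obtain ⟨hne, hinter⟩ := hb
    obtain ⟨w, hw⟩ := hinter
    set B := (⇑φ) '' A with hB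
    have hBcard : B.ncard = A.ncard := Set.ncard_image_of_injective _ φ.toEquiv.injective
    have hDB : (bdF G B).card = lam := by rw [hB, card_bdF_image]; exact hDA
    have hSB : S B := ⟨by omega, by omega⟩
    have hiA := hint A hSA hDA rfl w hw.2
    have hiB := hint B hSB hDB hBcard w hw.1
    have hsubU : intF G A w ∪ intF G B w ⊆ G.neighborFinset w := by
      intro x hx
      rw [Finset.mem_union] at hx
      rw [mem_neighborFinset]
      rcases hx with hx | hx
      · exact ((mem_intF G).mp hx).1
      · exact ((mem_intF G).mp hx).1
    have hUk : (intF G A w ∪ intF G B w).card ≤ k := by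
      have := Finset.card_le_card hsubU
      rwa [card_neighborFinset_eq_degree, hreg w] at this
    have hIne : (intF G A w ∩ intF G B w).Nonempty := by
      rw [← Finset.card_pos]
      have := Finset.card_union_add_card_inter (intF G A w) (intF G B w)
      omega
    obtain ⟨x, hx⟩ := hIne
    rw [Finset.mem_inter, mem_intF, mem_intF] at hx
    have hxw : x ≠ w := hx.1.1.ne'
    have hAB2 : 2 ≤ (A ∩ B).ncard :=
      ncard_pair_ge ⟨hx.1.2, hx.2.2⟩ ⟨hw.2, hw.1⟩ hxw
    have hABlt : (A ∩ B).ncard < A.ncard := by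
      refine Set.ncard_lt_ncard ?_ (Set.toFinite A)
      rw [Set.ssubset_iff_subset_ne]
      refine ⟨Set.inter_subset_left, ?_⟩
      intro h
      have hsub : A ⊆ B := by
        intro a ha
        have haB : a ∈ A ∩ B := by rw [h]; exact ha
        exact haB.2
      exact hne (Set.eq_of_subset_of_ncard_le hsub (le_of_eq hBcard) (Set.toFinite B)).symm
    have hUI : (A ∪ B).ncard + (A ∩ B).ncard = A.ncard + B.ncard :=
      Set.ncard_union_add_ncard_inter A B (Set.toFinite A) (Set.toFinite B)
    have hSint : S (A ∩ B) := ⟨hAB2, by omega⟩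
    have hSuni : S (A ∪ B) := ⟨by omega, by omega⟩
    have hsubm := submod G A B
    have h1 : lam ≤ (bdF G (A ∩ B)).card := hlam_lb _ hSint
    have h2 : lam ≤ (bdF G (A ∪ B)).card := hlam_lb _ hSuni
    have h3 : (bdF G (A ∩ B)).card = lam := by omega
    have := hmin_size _ hSint h3
    omega
  -- G[A] is regular
  have hAne : A.Nonempty := Set.nonempty_of_ncard_ne_zero (by omega)
  obtain ⟨v₀, hv₀⟩ := hAne
  set r : ℕ := (intF G A v₀).card with hrdef
  have hregA : ∀ v ∈ A, (intF G A v).card = r := by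
    intro v hv
    obtain ⟨φ, hφ⟩ := hvt v₀ v
    have himg : (⇑φ) '' A = A := by
      rcases hblock φ with h | h
      · exact h
      · exfalso
        have hmem : v ∈ ((⇑φ) '' A) ∩ A := ⟨⟨v₀, hv₀, hφ⟩, hv⟩
        rw [h] at hmem
        exact hmem
    calc (intF G A v).card = (intF G ((⇑φ) '' A) (φ v₀)).card := by rw [himg, hφ]
      _ = (intF G A v₀).card := card_intF_image G φ A v₀
  have hrk : r ≤ k := by
    have := card_ext_add_int G hreg A v₀
    omega
  have hlam_eq : lam = A.ncard * (k - r) := by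
    rw [← hDA, card_bdF_sum]
    rw [Finset.sum_congr rfl (fun v hv => ?_), Finset.sum_const, smul_eq_mul, card_vF]
    have h1 := card_ext_add_int G hreg A v
    rw [hregA v ((mem_vF).mp hv)] at h1
    omega
  rcases Nat.lt_or_ge r k with hrlt | hrge
  · -- r < k : use triangle-freeness
    have hr1 : 1 ≤ r := by
      have := hint A hSA hDA rfl v₀ hv₀
      omega
    obtain ⟨u, hu⟩ : (intF G A v₀).Nonempty := Finset.card_pos.mp (by omega)
    rw [mem_intF] at hu
    have hdisj : Disjoint (intF G A u) (intF G A v₀) := by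
      rw [Finset.disjoint_left]
      intro x hx hx'
      rw [mem_intF] at hx hx'
      exact triangle_free_of_girth G hg hu.1 hx.1 hx'.1.symm
    have hsub : intF G A u ∪ intF G A v₀ ⊆ vF A := by
      intro x hx
      rw [Finset.mem_union] at hx
      rw [mem_vF]
      rcases hx with hx | hx
      · exact ((mem_intF G).mp hx).2
      · exact ((mem_intF G).mp hx).2
    have h2r : 2 * r ≤ A.ncard := by
      have hcu := Finset.card_union_of_disjoint hdisj
      have := Finset.card_le_card hsub
      rw [hcu, hregA u hu.2, card_vF] at this
      omega
    obtain ⟨a, ha⟩ : ∃ a, r = a + 1 := ⟨r - 1, by omega⟩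
    obtain ⟨b, hb⟩ : ∃ b, k - r = b + 1 := ⟨k - r - 1, by omega⟩
    have hks : 2 * r * (k - r) ≤ A.ncard * (k - r) :=
      Nat.mul_le_mul_right _ h2r
    have hexp : 2 * r * (k - r) = 2 * (a * b) + 2 * a + 2 * b + 2 := by
      rw [hb, ha]; ring
    have hab : 0 ≤ a * b := Nat.zero_le _
    have hkab : k = a + b + 2 := by omega
    rw [hexp, ← hlam_eq] at hks
    omega
  · -- r = k : boundary empty, contradicting connectivity
    have hrk' : r = k := le_antisymm hrk hrge
    have hlam0 : lam = 0 := by rw [hlam_eq, hrk']; simp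
    have hAcne : Aᶜ.Nonempty := Set.nonempty_of_ncard_ne_zero (by omega)
    obtain ⟨p, hp⟩ := bdF_nonempty G hconn ⟨v₀, hv₀⟩ hAcne
    have hpos : 0 < (bdF G A).card := Finset.card_pos.mpr ⟨p, hp⟩
    omega
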